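/- arXiv:2004.02476 — 2 statements merged into one kernel-verified Lean document; each statement's English description precedes it below -/
import Mathlib

section
/- With the greedy index set J defined from θ ∈ [0,1] and a residual r = b − Ax with Aᵀr ≠ 0, any index j* attaining the maximum of |A_(j)ᵀ r|² / ‖A_(j)‖₂² over 1 ≤ j ≤ n satisfies |A_(j*)ᵀ r|² ≥ ε · ‖Aᵀr‖₂² · ‖A_(j*)‖₂², i.e. j* ∈ J; in particular J is nonempty. -/
noncomputable section
open Matrix

/-- Squared Euclidean norm `‖v‖₂²` of a vector. -/
def norm2 {ι : Type*} [Fintype ι] (v : ι → ℝ) : ℝ := ∑ i, (v i) ^ 2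

/-- Squared Frobenius norm `‖A‖_F²` of a matrix. -/
def frob2 {ι κ : Type*} [Fintype ι] [Fintype κ] (A : Matrix ι κ ℝ) : ℝ :=
  ∑ i, ∑ j, (A i j) ^ 2

/-- Squared largest singular value `σ_max(B)²`, i.e. the largest eigenvalue of `Bᵀ * B`. -/
def sigmaMaxSq {ι κ : Type*} [Fintype ι] [Fintype κ] [DecidableEq κ]
    (B : Matrix ι κ ℝ) : ℝ :=
  sSup (Set.range (show (Bᵀ * B).IsHermitian by
    simpa using Matrix.isHermitian_conjTranspose_mul_self B).eigenvalues)

/-- Squared smallest singular value `σ_min(B)²`, i.e. the smallest eigenvalue of `Bᵀ * B`. -/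
def sigmaMinSq {ι κ : Type*} [Fintype ι] [Fintype κ] [DecidableEq κ]
    (B : Matrix ι κ ℝ) : ℝ :=
  sInf (Set.range (show (Bᵀ * B).IsHermitian by
    simpa using Matrix.isHermitian_conjTranspose_mul_self B).eigenvalues)

/-- Squared Euclidean norm `‖A_(j)‖₂²` of the `j`-th column of `A`. -/
def col2 {m n : ℕ} (A : Matrix (Fin m) (Fin n) ℝ) (j : Fin n) : ℝ := ∑ i, (A i j) ^ 2

/-- `A` has full column rank: its columns are linearly independent. -/
def FullColRank {m n : ℕ} (A : Matrix (Fin m) (Fin n) ℝ) : Prop :=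
  LinearIndependent ℝ fun j : Fin n => (fun i => A i j : Fin m → ℝ)

/-- `max_{1 ≤ j ≤ n} |A_(j)ᵀ r|² / ‖A_(j)‖₂²`. -/
def maxRatio {m n : ℕ} (A : Matrix (Fin m) (Fin n) ℝ) (r : Fin m → ℝ) : ℝ :=
  ⨆ j : Fin n, ((Aᵀ *ᵥ r) j) ^ 2 / col2 A j

/-- The greedy parameter
`ε = (θ/‖Aᵀr‖₂²)·max_j |A_(j)ᵀ r|²/‖A_(j)‖₂² + (1−θ)/‖A‖_F²`. -/
def eps {m n : ℕ} (A : Matrix (Fin m) (Fin n) ℝ) (r : Fin m → ℝ) (θ : ℝ) : ℝ :=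
  θ / norm2 (Aᵀ *ᵥ r) * maxRatio A r + (1 - θ) / frob2 A

open Classical in
/-- The greedy index set `J = { j : |A_(j)ᵀ r|² ≥ ε ‖Aᵀr‖₂² ‖A_(j)‖₂² }`. -/
def greedySet {m n : ℕ} (A : Matrix (Fin m) (Fin n) ℝ) (r : Fin m → ℝ) (θ : ℝ) :
    Finset (Fin n) :=
  Finset.univ.filter fun j =>
    eps A r θ * norm2 (Aᵀ *ᵥ r) * col2 A j ≤ ((Aᵀ *ᵥ r) j) ^ 2

/-- The column submatrix `A_J` of `A`, with columns indexed by `J`. -/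
def subCols {m n : ℕ} (A : Matrix (Fin m) (Fin n) ℝ) (J : Finset (Fin n)) :
    Matrix (Fin m) {j // j ∈ J} ℝ :=
  A.submatrix id fun j => (j : Fin n)

/-- The submatrix `I_J` of the `n × n` identity with columns indexed by `J`. -/
def subId {n : ℕ} (J : Finset (Fin n)) : Matrix (Fin n) {j // j ∈ J} ℝ :=
  (1 : Matrix (Fin n) (Fin n) ℝ).submatrix id fun j => (j : Fin n)

/-- Moore–Penrose pseudoinverse of a full-column-rank matrix: `B† = (BᵀB)⁻¹Bᵀ`. -/
def pinv {ι κ : Type*} [Fintype ι] [Fintype κ] [DecidableEq κ] (B : Matrix ι κ ℝ) :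
    Matrix κ ι ℝ :=
  (Bᵀ * B)⁻¹ * Bᵀ

/-- The matrix `Ã_J` whose columns are the normalized columns `A_(j)/‖A_(j)‖₂`, `j ∈ J`. -/
def tildeA {m n : ℕ} (A : Matrix (Fin m) (Fin n) ℝ) (J : Finset (Fin n)) :
    Matrix (Fin m) {j // j ∈ J} ℝ :=
  Matrix.of fun i j => A i (j : Fin n) / Real.sqrt (col2 A (j : Fin n))

/-- The matrix `Ĩ_J` whose columns are `e_j/‖A_(j)‖₂`, `j ∈ J`. -/
def tildeI {m n : ℕ} (A : Matrix (Fin m) (Fin n) ℝ) (J : Finset (Fin n)) :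
    Matrix (Fin n) {j // j ∈ J} ℝ :=
  Matrix.of fun i j => (if i = (j : Fin n) then 1 else 0) / Real.sqrt (col2 A (j : Fin n))

/-- an index attaining `max_j |A_(j)ᵀ r|²/‖A_(j)‖₂²` belongs to the
greedy index set `J`; in particular `J` is nonempty. -/
theorem stmt2 {m n : ℕ} (A : Matrix (Fin m) (Fin n) ℝ) (hA : FullColRank A)
    (b : Fin m → ℝ) (θ : ℝ) (hθ : θ ∈ Set.Icc (0 : ℝ) 1) (x : Fin n → ℝ)
    (r : Fin m → ℝ) (hr : r = b - A *ᵥ x) (hr0 : Aᵀ *ᵥ r ≠ 0)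
    (jstar : Fin n)
    (hmax : ((Aᵀ *ᵥ r) jstar) ^ 2 / col2 A jstar = maxRatio A r) :
    eps A r θ * norm2 (Aᵀ *ᵥ r) * col2 A jstar ≤ ((Aᵀ *ᵥ r) jstar) ^ 2 ∧
      jstar ∈ greedySet A r θ ∧ (greedySet A r θ).Nonempty := by
  have hC : ∀ j, 0 < col2 A j := by
    intro j
    have hne : (fun i => A i j) ≠ 0 := hA.ne_zero j
    have hex : ∃ i, A i j ≠ 0 := by
      by_contra h; push_neg at h; exact hne (funext fun i => h i)
    obtain ⟨i, hi⟩ := hex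
    exact Finset.sum_pos' (fun i _ => sq_nonneg _)
      ⟨i, Finset.mem_univ i, pow_two_pos_of_ne_zero hi⟩
  have hF' : frob2 A = ∑ j, col2 A j := by
    unfold frob2 col2; rw [Finset.sum_comm]
  have hF : 0 < frob2 A := by
    rw [hF']; exact Finset.sum_pos (fun j _ => hC j) ⟨jstar, Finset.mem_univ _⟩
  have hN : 0 < norm2 (Aᵀ *ᵥ r) := by
    have hex : ∃ i, (Aᵀ *ᵥ r) i ≠ 0 := by
      by_contra h; push_neg at h; exact hr0 (funext h)
    obtain ⟨i, hi⟩ := hex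
    exact Finset.sum_pos' (fun i _ => sq_nonneg _)
      ⟨i, Finset.mem_univ i, pow_two_pos_of_ne_zero hi⟩
  have hMle : ∀ j, ((Aᵀ *ᵥ r) j) ^ 2 / col2 A j ≤ maxRatio A r := by
    intro j
    unfold maxRatio
    exact le_ciSup (f := fun j => ((Aᵀ *ᵥ r) j) ^ 2 / col2 A j) (Set.Finite.bddAbove (Set.finite_range _)) j
  have hNF : norm2 (Aᵀ *ᵥ r) ≤ maxRatio A r * frob2 A := by
    rw [hF', Finset.mul_sum]
    unfold norm2
    apply Finset.sum_le_sum
    intro j _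
    calc ((Aᵀ *ᵥ r) j) ^ 2 = ((Aᵀ *ᵥ r) j) ^ 2 / col2 A j * col2 A j :=
          (div_mul_cancel₀ _ (hC j).ne').symm
      _ ≤ maxRatio A r * col2 A j :=
          mul_le_mul_of_nonneg_right (hMle j) (hC j).le
  have hS : maxRatio A r * col2 A jstar = ((Aᵀ *ᵥ r) jstar) ^ 2 := by
    rw [← hmax]; exact div_mul_cancel₀ _ (hC jstar).ne'
  obtain ⟨hθ0, hθ1⟩ := hθ
  have key : eps A r θ * norm2 (Aᵀ *ᵥ r) * col2 A jstar ≤ ((Aᵀ *ᵥ r) jstar) ^ 2 := by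
    unfold eps
    have h1 : (θ / norm2 (Aᵀ *ᵥ r) * maxRatio A r) * norm2 (Aᵀ *ᵥ r) * col2 A jstar
        = θ * ((Aᵀ *ᵥ r) jstar) ^ 2 := by
      rw [← hS]; field_simp
    have h2 : ((1 - θ) / frob2 A) * norm2 (Aᵀ *ᵥ r) * col2 A jstar
        ≤ (1 - θ) * ((Aᵀ *ᵥ r) jstar) ^ 2 := by
      rw [← hS, div_mul_eq_mul_div, div_mul_eq_mul_div, div_le_iff₀ hF]
      calc (1 - θ) * norm2 (Aᵀ *ᵥ r) * col2 A jstar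
          ≤ (1 - θ) * (maxRatio A r * frob2 A) * col2 A jstar := by
            apply mul_le_mul_of_nonneg_right _ (hC jstar).le
            exact mul_le_mul_of_nonneg_left hNF (by linarith)
        _ = (1 - θ) * (maxRatio A r * col2 A jstar) * frob2 A := by ring
    calc (θ / norm2 (Aᵀ *ᵥ r) * maxRatio A r + (1 - θ) / frob2 A) * norm2 (Aᵀ *ᵥ r)
          * col2 A jstar
        = (θ / norm2 (Aᵀ *ᵥ r) * maxRatio A r) * norm2 (Aᵀ *ᵥ r) * col2 A jstar
          + ((1 - θ) / frob2 A) * norm2 (Aᵀ *ᵥ r) * col2 A jstar := by ring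
      _ ≤ θ * ((Aᵀ *ᵥ r) jstar) ^ 2 + (1 - θ) * ((Aᵀ *ᵥ r) jstar) ^ 2 := by
          rw [h1]; linarith [h2]
      _ = ((Aᵀ *ᵥ r) jstar) ^ 2 := by ring
  have hmem : jstar ∈ greedySet A r θ := by
    unfold greedySet; simp only [Finset.mem_filter, Finset.mem_univ, true_and]; exact key
  exact ⟨key, hmem, ⟨jstar, hmem⟩⟩
end
end

section
/- Let J ⊆ {1,…,n} be a nonempty index set and let x ∈ R^n. If x' = x + I_J A_J†(b − Ax), then ‖x' − x⋆‖²_{AᵀA} ≤ ‖x − x⋆‖²_{AᵀA} − (1/σ_max(A_J)²) · ‖A_Jᵀ A(x − x⋆)‖₂², where σ_max(A_J) is the largest singular value of A_J. -/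
noncomputable section
open Matrix

lemma dot_mulVec_left' {ι κ : Type*} [Fintype ι] [Fintype κ] (M : Matrix ι κ ℝ) (v : ι → ℝ) (w : κ → ℝ) :
    v ⬝ᵥ (M *ᵥ w) = (Mᵀ *ᵥ v) ⬝ᵥ w := by
  rw [dotProduct_mulVec, ← vecMul_transpose, transpose_transpose]

lemma norm2_dot' {ι : Type*} [Fintype ι] (v : ι → ℝ) : norm2 v = v ⬝ᵥ v := by
  simp [norm2, dotProduct, sq]

lemma key_lemma {ι κ : Type*} [Fintype ι] [Fintype κ] [DecidableEq κ] [Nonempty κ]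
    (B : Matrix ι κ ℝ) (hpd : (Bᵀ * B).PosDef) (v : κ → ℝ) :
    1 / sigmaMaxSq B * (v ⬝ᵥ v) ≤ v ⬝ᵥ ((Bᵀ * B)⁻¹ *ᵥ v) := by
  have hH : (Bᵀ * B).IsHermitian := by simpa using Matrix.isHermitian_conjTranspose_mul_self B
  set μ : κ → ℝ := hH.eigenvalues with hμ
  set U : Matrix κ κ ℝ := (hH.eigenvectorUnitary : Matrix κ κ ℝ) with hU
  have hμpos : ∀ i, 0 < μ i := fun i => hpd.eigenvalues_pos i
  have hUU : U * star U = 1 := Matrix.mem_unitaryGroup_iff.mp (hH.eigenvectorUnitary).2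
  have hUU' : star U * U = 1 := Matrix.mem_unitaryGroup_iff'.mp (hH.eigenvectorUnitary).2
  have hspec : Bᵀ * B = U * diagonal μ * star U := by
    have := hH.spectral_theorem
    simpa using this
  have hinv : (Bᵀ * B)⁻¹ = U * diagonal (fun i => (μ i)⁻¹) * star U := by
    apply Matrix.inv_eq_right_inv
    rw [hspec]
    calc U * diagonal μ * star U * (U * diagonal (fun i => (μ i)⁻¹) * star U)
        = U * (diagonal μ * ((star U * U) * diagonal (fun i => (μ i)⁻¹))) * star U := by
          noncomm_ring [mul_assoc]
      _ = 1 := by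
          rw [hUU', one_mul, diagonal_mul_diagonal]
          have : (fun i => μ i * (μ i)⁻¹) = fun _ => (1:ℝ) := by
            funext i; exact mul_inv_cancel₀ (hμpos i).ne'
          rw [this, diagonal_one, mul_one, hUU]
  -- λmax facts
  set t : ℝ := sigmaMaxSq B with ht
  have hbdd : BddAbove (Set.range μ) := (Set.finite_range μ).bddAbove
  have hle : ∀ i, μ i ≤ t := fun i => le_csSup hbdd ⟨i, rfl⟩
  have htpos : 0 < t := lt_of_lt_of_le (hμpos (Classical.arbitrary κ)) (hle _)
  have hsUT : star U = Uᵀ := by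
    ext i j; simp [star_apply]
  rw [hsUT] at hUU hUU' hinv
  set c : κ → ℝ := Uᵀ *ᵥ v with hc
  have hvv : v ⬝ᵥ v = c ⬝ᵥ c := by
    have : v ⬝ᵥ v = v ⬝ᵥ ((U * Uᵀ) *ᵥ v) := by rw [hUU, one_mulVec]
    rw [this, ← mulVec_mulVec, dot_mulVec_left']
  have hquad : v ⬝ᵥ ((Bᵀ * B)⁻¹ *ᵥ v) = ∑ i, (μ i)⁻¹ * (c i)^2 := by
    rw [hinv, ← mulVec_mulVec, ← mulVec_mulVec, dot_mulVec_left', ← hc]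
    rw [dotProduct]
    congr 1; funext i
    rw [mulVec_diagonal]; ring
  rw [hquad, hvv, dotProduct, Finset.mul_sum]
  apply Finset.sum_le_sum
  intro i _
  have h1 : 1 / t ≤ (μ i)⁻¹ := by
    rw [one_div]
    exact inv_anti₀ (hμpos i) (hle i)
  have h2 : (0:ℝ) ≤ c i * c i := mul_self_nonneg _
  calc 1 / t * (c i * c i) ≤ (μ i)⁻¹ * (c i * c i) := by nlinarith
    _ = (μ i)⁻¹ * (c i)^2 := by ring



/-- one-step bound for a block Gauss–Seidel update:
`‖x' − x⋆‖²_{AᵀA} ≤ ‖x − x⋆‖²_{AᵀA} − (1/σ_max(A_J)²)‖A_Jᵀ A(x − x⋆)‖₂²`. -/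
theorem stmt4 {m n : ℕ} (A : Matrix (Fin m) (Fin n) ℝ) (hA : FullColRank A)
    (b : Fin m → ℝ) (xstar : Fin n → ℝ) (hstar : (Aᵀ * A) *ᵥ xstar = Aᵀ *ᵥ b)
    (J : Finset (Fin n)) (hJ : J.Nonempty) (x x' : Fin n → ℝ)
    (hx' : x' = x + subId J *ᵥ (pinv (subCols A J) *ᵥ (b - A *ᵥ x))) :
    norm2 (A *ᵥ (x' - xstar)) ≤
      norm2 (A *ᵥ (x - xstar)) -
        1 / sigmaMaxSq (subCols A J) *
          norm2 ((subCols A J)ᵀ *ᵥ (A *ᵥ (x - xstar))) := by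
  haveI : Nonempty {j // j ∈ J} := ⟨⟨hJ.choose, hJ.choose_spec⟩⟩
  set B := subCols A J with hB
  set M := Bᵀ * B with hM
  set e := x - xstar with he
  set y := A *ᵥ e with hy
  set v := Bᵀ *ᵥ y with hv
  -- A * subId J = B
  have hAI : A * subId J = B := by
    ext i j
    simp only [subId, subCols, Matrix.mul_apply, Matrix.submatrix_apply, id_eq, Matrix.one_apply,
      mul_ite, mul_one, mul_zero]
    rw [Finset.sum_ite_eq' Finset.univ (j : Fin n) (fun k => A i k)]
    simp only [Finset.mem_univ, if_true]
    rfl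
  -- Bᵀ action
  have hBt : ∀ u : Fin m → ℝ, Bᵀ *ᵥ u = (subId J)ᵀ *ᵥ (Aᵀ *ᵥ u) := by
    intro u
    rw [← hAI, transpose_mul, ← mulVec_mulVec]
  -- injectivity of B.mulVec
  have hBi : Function.Injective B.mulVec := by
    rw [Matrix.mulVec_injective_iff]
    have := hA.comp (Subtype.val : {j // j ∈ J} → Fin n) Subtype.val_injective
    exact this
  -- PosDef
  have hpd : M.PosDef := by
    refine Matrix.PosDef.of_dotProduct_mulVec_pos (by simpa using Matrix.isHermitian_conjTranspose_mul_self B) fun z hz => ?_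
    have hz' : B *ᵥ z ≠ 0 := by
      intro h
      exact hz (hBi (by simpa using h))
    have h1 : star z ⬝ᵥ (M *ᵥ z) = (B *ᵥ z) ⬝ᵥ (B *ᵥ z) := by
      rw [hM, ← mulVec_mulVec]
      rw [show (star z : {j // j ∈ J} → ℝ) = z from funext fun i => star_trivial _]
      rw [dot_mulVec_left', transpose_transpose]
    rw [h1]
    rcases lt_or_eq_of_le (Finset.sum_nonneg fun i _ => mul_self_nonneg ((B *ᵥ z) i) :
        (0:ℝ) ≤ (B *ᵥ z) ⬝ᵥ (B *ᵥ z)) with h | h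
    · exact h
    · exact absurd ((dotProduct_self_eq_zero).mp h.symm) hz'
  have hMunit : IsUnit M.det := (Matrix.isUnit_iff_isUnit_det M).mp hpd.isUnit
  have hMinv : M * M⁻¹ = 1 := Matrix.mul_nonsing_inv M hMunit
  set wv := M⁻¹ *ᵥ v with hwv
  -- residual
  have hAtr : Aᵀ *ᵥ (b - A *ᵥ x) = -(Aᵀ *ᵥ y) := by
    rw [hy, he]
    simp only [mulVec_sub, mulVec_mulVec, neg_sub]
    rw [hstar]
  have hBr : Bᵀ *ᵥ (b - A *ᵥ x) = -v := by
    rw [hBt, hAtr, mulVec_neg, hv, hBt]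
  -- update formula
  have hx'' : A *ᵥ (x' - xstar) = y - B *ᵥ wv := by
    have h1 : x' - xstar = e + subId J *ᵥ (pinv B *ᵥ (b - A *ᵥ x)) := by
      rw [hx', he]; funext i; simp; ring
    have h2 : pinv B *ᵥ (b - A *ᵥ x) = -wv := by
      rw [pinv, ← mulVec_mulVec, hBr, hwv, mulVec_neg]
    rw [h1, h2, mulVec_add, mulVec_mulVec, hAI, mulVec_neg, ← hy]
    funext i; simp; ring
  rw [hx'']
  -- norm2 expansion
  have hyz : y ⬝ᵥ (B *ᵥ wv) = v ⬝ᵥ wv := by rw [dot_mulVec_left', ← hv]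
  have hzz : (B *ᵥ wv) ⬝ᵥ (B *ᵥ wv) = v ⬝ᵥ wv := by
    rw [dot_mulVec_left', mulVec_mulVec, ← hM, hwv, mulVec_mulVec, hMinv, one_mulVec]
  have hexp : norm2 (y - B *ᵥ wv) = norm2 y - v ⬝ᵥ wv := by
    rw [norm2_dot', norm2_dot', sub_dotProduct, dotProduct_sub, dotProduct_sub,
      hyz, hzz, dotProduct_comm (B *ᵥ wv) y, hyz]
    ring
  rw [hexp]
  -- key bound
  have hkey : 1 / sigmaMaxSq B * (v ⬝ᵥ v) ≤ v ⬝ᵥ wv :=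
    key_lemma B hpd v
  have : norm2 v = v ⬝ᵥ v := norm2_dot' v
  have hσ : 1 / sigmaMaxSq B * norm2 v ≤ v ⬝ᵥ wv := by rw [this]; exact hkey
  linarith
end
end
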